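/- Convexity step: Σ_{x,y : p(x,y)>0} p(x,y)·D(p(·|x,y)‖p(·|y)) ≥ Σ_{x : p(x)>0} p(x)·D(p(·|x)‖r_x), where r_x = Σ_{y : p(y|x)>0} p(y|x)·p(·|y); moreover r_x ∈ C_Y for every x with p(x) > 0, so I(Z;X,Y) − I(Z;Y) ≥ Σ_{x : p(x)>0} p(x)·inf_{q ∈ C_Y} D(p(·|x)‖q). -/

import Mathlib

open scoped BigOperators

/-- `p` is a probability mass function on a finite type. -/
def IsPMF {α : Type*} [Fintype α] (p : α → ℝ) : Prop :=
  (∀ a, 0 ≤ p a) ∧ ∑ a, p a = 1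

/-- Kullback–Leibler divergence `D(u‖v) = Σ u log (u/v)` (with the convention `0 log 0 = 0`),
`⊤` if absolute continuity fails, i.e. if `u a > 0 = v a` for some `a`. -/
noncomputable def klDiv {α : Type*} [Fintype α] (u v : α → ℝ) : EReal :=
  if ∀ a, 0 < u a → 0 < v a then ((∑ a, u a * Real.log (u a / v a) : ℝ) : EReal) else ⊤

variable {𝓧 𝓨 𝓩 : Type*} [Fintype 𝓧] [Fintype 𝓨] [Fintype 𝓩]

/-- Marginal distribution of the first variable `X`. -/
noncomputable def margX (p : 𝓧 × 𝓨 × 𝓩 → ℝ) (x : 𝓧) : ℝ := ∑ y, ∑ z, p (x, y, z)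

/-- Marginal distribution of the second variable `Y`. -/
noncomputable def margY (p : 𝓧 × 𝓨 × 𝓩 → ℝ) (y : 𝓨) : ℝ := ∑ x, ∑ z, p (x, y, z)

/-- Marginal distribution of the third variable `Z`. -/
noncomputable def margZ (p : 𝓧 × 𝓨 × 𝓩 → ℝ) (z : 𝓩) : ℝ := ∑ x, ∑ y, p (x, y, z)

/-- Joint marginal `p(x,z)`. -/
noncomputable def margXZ (p : 𝓧 × 𝓨 × 𝓩 → ℝ) (x : 𝓧) (z : 𝓩) : ℝ := ∑ y, p (x, y, z)

/-- Joint marginal `p(y,z)`. -/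
noncomputable def margYZ (p : 𝓧 × 𝓨 × 𝓩 → ℝ) (y : 𝓨) (z : 𝓩) : ℝ := ∑ x, p (x, y, z)

/-- Joint marginal `p(x,y)`. -/
noncomputable def margXY (p : 𝓧 × 𝓨 × 𝓩 → ℝ) (x : 𝓧) (y : 𝓨) : ℝ := ∑ z, p (x, y, z)

/-- Conditional distribution `p(·|x)` of `Z` given `X = x`. -/
noncomputable def condX (p : 𝓧 × 𝓨 × 𝓩 → ℝ) (x : 𝓧) : 𝓩 → ℝ :=
  fun z => margXZ p x z / margX p x

/-- Conditional distribution `p(·|y)` of `Z` given `Y = y`. -/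
noncomputable def condY (p : 𝓧 × 𝓨 × 𝓩 → ℝ) (y : 𝓨) : 𝓩 → ℝ :=
  fun z => margYZ p y z / margY p y

/-- Conditional distribution `p(·|x,y)` of `Z` given `(X,Y) = (x,y)`. -/
noncomputable def condXY (p : 𝓧 × 𝓨 × 𝓩 → ℝ) (x : 𝓧) (y : 𝓨) : 𝓩 → ℝ :=
  fun z => p (x, y, z) / margXY p x y

/-- `C_X`: the convex hull of the conditionals `{p(·|x) : p(x) > 0}`. -/
noncomputable def CXhull (p : 𝓧 × 𝓨 × 𝓩 → ℝ) : Set (𝓩 → ℝ) :=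
  convexHull ℝ {q | ∃ x, 0 < margX p x ∧ q = condX p x}

/-- `C_Y`: the convex hull of the conditionals `{p(·|y) : p(y) > 0}`. -/
noncomputable def CYhull (p : 𝓧 × 𝓨 × 𝓩 → ℝ) : Set (𝓩 → ℝ) :=
  convexHull ℝ {q | ∃ y, 0 < margY p y ∧ q = condY p y}

/-- Mutual information `I(Z;X)` (terms with `p(x,z) = 0` vanish). -/
noncomputable def miZX (p : 𝓧 × 𝓨 × 𝓩 → ℝ) : ℝ :=
  ∑ x, ∑ z, margXZ p x z * Real.log (margXZ p x z / (margX p x * margZ p z))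

/-- Mutual information `I(Z;Y)`. -/
noncomputable def miZY (p : 𝓧 × 𝓨 × 𝓩 → ℝ) : ℝ :=
  ∑ y, ∑ z, margYZ p y z * Real.log (margYZ p y z / (margY p y * margZ p z))

/-- Mutual information `I(Z;X,Y)` between `Z` and the joint variable `(X,Y)`. -/
noncomputable def miZXY (p : 𝓧 × 𝓨 × 𝓩 → ℝ) : ℝ :=
  ∑ x, ∑ y, ∑ z, p (x, y, z) * Real.log (p (x, y, z) / (margXY p x y * margZ p z))

/-- Projected information `I_pr(X ↘ Y; Z) =
`Σ_{x : p(x)>0} p(x)·[D(p(·|x)‖p_Z) − inf_{q ∈ C_Y} D(p(·|x)‖q)]`. -/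
noncomputable def IprXY (p : 𝓧 × 𝓨 × 𝓩 → ℝ) : ℝ :=
  ∑ x, if 0 < margX p x then
      margX p x * ((klDiv (condX p x) (margZ p)).toReal -
        (⨅ q ∈ CYhull p, klDiv (condX p x) q).toReal)
    else 0

/-- Projected information `I_pr(Y ↘ X; Z)`. -/
noncomputable def IprYX (p : 𝓧 × 𝓨 × 𝓩 → ℝ) : ℝ :=
  ∑ y, if 0 < margY p y then
      margY p y * ((klDiv (condY p y) (margZ p)).toReal -
        (⨅ q ∈ CXhull p, klDiv (condY p y) q).toReal)
    else 0

/-- Redundant information `I_red(Z;X,Y) = min {I_pr(X↘Y;Z), I_pr(Y↘X;Z)}`. -/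
noncomputable def Ired (p : 𝓧 × 𝓨 × 𝓩 → ℝ) : ℝ := min (IprXY p) (IprYX p)

/-- The mixture `r_x = Σ_{y : p(y|x)>0} p(y|x)·p(·|y)`. -/
noncomputable def rmix (p : 𝓧 × 𝓨 × 𝓩 → ℝ) (x : 𝓧) : 𝓩 → ℝ :=
  fun z => ∑ y, if 0 < margXY p x y then (margXY p x y / margX p x) * condY p y z else 0

section AuxConv

lemma aux_coe_sum {α : Type*} [Fintype α] (f : α → ℝ) :
    ((∑ a, f a : ℝ) : EReal) = ∑ a, ((f a : ℝ) : EReal) :=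
  map_sum (⟨⟨Real.toEReal, EReal.coe_zero⟩, fun x y => EReal.coe_add x y⟩ : ℝ →+ EReal) f
    Finset.univ

/-- The log-sum inequality. -/
lemma aux_log_sum {α : Type*} [Fintype α] (a b : α → ℝ) (ha : ∀ i, 0 ≤ a i)
    (hb : ∀ i, 0 ≤ b i) (hab : ∀ i, 0 < a i → 0 < b i) :
    (∑ i, a i) * Real.log ((∑ i, a i) / (∑ i, b i)) ≤ ∑ i, a i * Real.log (a i / b i) := by
  classical
  set t : Finset α := Finset.univ.filter fun i => 0 < b i with ht
  have hbz : ∀ i, i ∉ t → b i = 0 := by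
    intro i hi
    simp only [ht, Finset.mem_filter, Finset.mem_univ, true_and, not_lt] at hi
    exact le_antisymm hi (hb i)
  have haz : ∀ i, i ∉ t → a i = 0 := by
    intro i hi
    by_contra h
    exact hi (by simp [ht, hab i ((ha i).lt_of_ne (Ne.symm h))])
  have hA : ∑ i, a i = ∑ i ∈ t, a i :=
    (Finset.sum_subset t.subset_univ fun i _ hi => haz i hi).symm
  have hB : ∑ i, b i = ∑ i ∈ t, b i :=
    (Finset.sum_subset t.subset_univ fun i _ hi => hbz i hi).symm
  have hR : ∑ i, a i * Real.log (a i / b i) = ∑ i ∈ t, a i * Real.log (a i / b i) :=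
    (Finset.sum_subset t.subset_univ fun i _ hi => by rw [haz i hi, zero_mul]).symm
  rw [hA, hB, hR]
  rcases t.eq_empty_or_nonempty with h0 | hne
  · simp [h0]
  have hBpos : 0 < ∑ i ∈ t, b i :=
    Finset.sum_pos (fun i hi => (Finset.mem_filter.1 hi).2) hne
  have key := Real.convexOn_mul_log.map_centerMass_le (t := t) (w := b)
      (p := fun i => a i / b i) (fun i _ => hb i) hBpos
      (fun i _ => div_nonneg (ha i) (hb i))
  simp only [Finset.centerMass, Function.comp, smul_eq_mul] at key
  have h1 : ∑ i ∈ t, b i * (a i / b i) = ∑ i ∈ t, a i :=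
    Finset.sum_congr rfl fun i hi => mul_div_cancel₀ _ (Finset.mem_filter.1 hi).2.ne'
  have h2 : ∑ i ∈ t, b i * (a i / b i * Real.log (a i / b i)) =
      ∑ i ∈ t, a i * Real.log (a i / b i) :=
    Finset.sum_congr rfl fun i hi => by
      rw [← mul_assoc, mul_div_cancel₀ _ (Finset.mem_filter.1 hi).2.ne']
  rw [h1, h2, inv_mul_eq_div, inv_mul_eq_div] at key
  have h3 := mul_le_mul_of_nonneg_right key hBpos.le
  rw [div_mul_cancel₀ _ hBpos.ne', mul_right_comm, div_mul_cancel₀ _ hBpos.ne'] at h3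
  exact h3

variable {𝓧 𝓨 𝓩 : Type*} [Fintype 𝓧] [Fintype 𝓨] [Fintype 𝓩]
variable (p : 𝓧 × 𝓨 × 𝓩 → ℝ)

lemma aux_margXY_nonneg (hp0 : ∀ a, 0 ≤ p a) (x : 𝓧) (y : 𝓨) : 0 ≤ margXY p x y :=
  Finset.sum_nonneg fun _ _ => hp0 _

lemma aux_margX_nonneg (hp0 : ∀ a, 0 ≤ p a) (x : 𝓧) : 0 ≤ margX p x :=
  Finset.sum_nonneg fun _ _ => Finset.sum_nonneg fun _ _ => hp0 _

lemma aux_margXY_pos (hp0 : ∀ a, 0 ≤ p a) {x : 𝓧} {y : 𝓨} {z : 𝓩}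
    (h : 0 < p (x, y, z)) : 0 < margXY p x y :=
  lt_of_lt_of_le h (Finset.single_le_sum (f := fun z => p (x, y, z))
    (fun _ _ => hp0 _) (Finset.mem_univ z))

lemma aux_margXY_le_margX (hp0 : ∀ a, 0 ≤ p a) (x : 𝓧) (y : 𝓨) :
    margXY p x y ≤ margX p x :=
  Finset.single_le_sum (f := fun y => ∑ z, p (x, y, z))
    (fun _ _ => Finset.sum_nonneg fun _ _ => hp0 _) (Finset.mem_univ y)

lemma aux_margXY_le_margY (hp0 : ∀ a, 0 ≤ p a) (x : 𝓧) (y : 𝓨) :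
    margXY p x y ≤ margY p y :=
  Finset.single_le_sum (f := fun x => ∑ z, p (x, y, z))
    (fun _ _ => Finset.sum_nonneg fun _ _ => hp0 _) (Finset.mem_univ x)

lemma aux_margYZ_pos (hp0 : ∀ a, 0 ≤ p a) {x : 𝓧} {y : 𝓨} {z : 𝓩}
    (h : 0 < p (x, y, z)) : 0 < margYZ p y z :=
  lt_of_lt_of_le h (Finset.single_le_sum (f := fun x => p (x, y, z))
    (fun _ _ => hp0 _) (Finset.mem_univ x))

lemma aux_margYZ_le_margY (hp0 : ∀ a, 0 ≤ p a) (y : 𝓨) (z : 𝓩) :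
    margYZ p y z ≤ margY p y := by
  have : margY p y = ∑ z, margYZ p y z := Finset.sum_comm
  rw [this]
  exact Finset.single_le_sum (f := fun z => margYZ p y z)
    (fun _ _ => Finset.sum_nonneg fun _ _ => hp0 _) (Finset.mem_univ z)

lemma aux_margZ_pos (hp0 : ∀ a, 0 ≤ p a) {x : 𝓧} {y : 𝓨} {z : 𝓩}
    (h : 0 < p (x, y, z)) : 0 < margZ p z := by
  have h1 : p (x, y, z) ≤ ∑ y, p (x, y, z) :=
    Finset.single_le_sum (f := fun y => p (x, y, z)) (fun _ _ => hp0 _) (Finset.mem_univ y)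
  have h2 : (∑ y, p (x, y, z)) ≤ margZ p z :=
    Finset.single_le_sum (f := fun x => ∑ y, p (x, y, z))
      (fun _ _ => Finset.sum_nonneg fun _ _ => hp0 _) (Finset.mem_univ x)
  exact lt_of_lt_of_le h (h1.trans h2)

lemma aux_condY_pos (hp0 : ∀ a, 0 ≤ p a) {x : 𝓧} {y : 𝓨} {z : 𝓩}
    (h : 0 < p (x, y, z)) : 0 < condY p y z :=
  div_pos (aux_margYZ_pos p hp0 h)
    (lt_of_lt_of_le (aux_margYZ_pos p hp0 h) (aux_margYZ_le_margY p hp0 y z))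

lemma aux_condY_nonneg' (hp0 : ∀ a, 0 ≤ p a) (y : 𝓨) (z : 𝓩) : 0 ≤ condY p y z :=
  div_nonneg (Finset.sum_nonneg fun _ _ => hp0 _)
    (Finset.sum_nonneg fun _ _ => Finset.sum_nonneg fun _ _ => hp0 _)

lemma aux_condXY_pmem (hp0 : ∀ a, 0 ≤ p a) {x : 𝓧} {y : 𝓨} (hxy : 0 < margXY p x y)
    {z : 𝓩} (hz : 0 < condXY p x y z) : 0 < p (x, y, z) := by
  by_contra hc
  have : p (x, y, z) = 0 := le_antisymm (not_lt.1 hc) (hp0 _)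
  simp [condXY, this] at hz

lemma aux_ac_XY (hp0 : ∀ a, 0 ≤ p a) {x : 𝓧} {y : 𝓨} (hxy : 0 < margXY p x y) :
    ∀ z, 0 < condXY p x y z → 0 < condY p y z := fun z hz =>
  aux_condY_pos p hp0 (aux_condXY_pmem p hp0 hxy hz)

lemma aux_rmix_nonneg (hp0 : ∀ a, 0 ≤ p a) (x : 𝓧) (z : 𝓩) : 0 ≤ rmix p x z := by
  refine Finset.sum_nonneg fun y _ => ?_
  split_ifs with h
  · exact mul_nonneg (div_nonneg (aux_margXY_nonneg p hp0 x y) (aux_margX_nonneg p hp0 x))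
      (aux_condY_nonneg' p hp0 y z)
  · exact le_refl 0

lemma aux_ac_X (hp0 : ∀ a, 0 ≤ p a) {x : 𝓧} (hx : 0 < margX p x) :
    ∀ z, 0 < condX p x z → 0 < rmix p x z := by
  intro z hz
  have hxz : 0 < margXZ p x z := by
    by_contra hc
    have : margXZ p x z = 0 :=
      le_antisymm (not_lt.1 hc) (Finset.sum_nonneg fun _ _ => hp0 _)
    simp [condX, this] at hz
  obtain ⟨y, hy⟩ : ∃ y, 0 < p (x, y, z) := by
    by_contra hc
    push_neg at hc
    have : margXZ p x z = 0 :=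
      Finset.sum_eq_zero fun y _ => le_antisymm (hc y) (hp0 _)
    exact absurd this hxz.ne'
  have hterm : 0 < (if 0 < margXY p x y then (margXY p x y / margX p x) * condY p y z else 0) := by
    rw [if_pos (aux_margXY_pos p hp0 hy)]
    exact mul_pos (div_pos (aux_margXY_pos p hp0 hy) hx) (aux_condY_pos p hp0 hy)
  refine lt_of_lt_of_le hterm ?_
  exact Finset.single_le_sum
    (f := fun y => if 0 < margXY p x y then (margXY p x y / margX p x) * condY p y z else 0)
    (fun y' _ => by
      split_ifs with h
      · exact mul_nonneg (div_nonneg (aux_margXY_nonneg p hp0 x y') (aux_margX_nonneg p hp0 x))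
          (aux_condY_nonneg' p hp0 y' z)
      · exact le_refl 0)
    (Finset.mem_univ y)

lemma aux_keyz (hp0 : ∀ a, 0 ≤ p a) {x : 𝓧} (hx : 0 < margX p x) (z : 𝓩) :
    margX p x * (condX p x z * Real.log (condX p x z / rmix p x z)) ≤
      ∑ y, (if 0 < margXY p x y then
        margXY p x y * (condXY p x y z * Real.log (condXY p x y z / condY p y z)) else 0) := by
  classical
  set a : 𝓨 → ℝ := fun y => p (x, y, z) with haa
  set b : 𝓨 → ℝ := fun y => if 0 < margXY p x y then margXY p x y * condY p y z else 0 with hbb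
  have ha : ∀ y, 0 ≤ a y := fun y => hp0 _
  have hb : ∀ y, 0 ≤ b y := by
    intro y
    rw [hbb]; dsimp only
    split_ifs with h
    · exact mul_nonneg h.le (aux_condY_nonneg' p hp0 y z)
    · exact le_refl 0
  have hab : ∀ y, 0 < a y → 0 < b y := by
    intro y hy
    rw [hbb]; dsimp only
    rw [if_pos (aux_margXY_pos p hp0 hy)]
    exact mul_pos (aux_margXY_pos p hp0 hy) (aux_condY_pos p hp0 hy)
  have hA : ∑ y, a y = margXZ p x z := rfl
  have hB : ∑ y, b y = margX p x * rmix p x z := by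
    simp only [rmix, Finset.mul_sum]
    refine Finset.sum_congr rfl fun y _ => ?_
    rw [hbb]; dsimp only
    split_ifs with h
    · field_simp
    · rw [mul_zero]
  have key := aux_log_sum a b ha hb hab
  rw [hA, hB] at key
  calc margX p x * (condX p x z * Real.log (condX p x z / rmix p x z))
      = margXZ p x z * Real.log (margXZ p x z / (margX p x * rmix p x z)) := by
        simp only [condX]
        rw [div_div, ← mul_assoc, mul_comm (margX p x) (margXZ p x z / margX p x),
          div_mul_cancel₀ _ hx.ne']
    _ ≤ ∑ y, a y * Real.log (a y / b y) := key
    _ = ∑ y, (if 0 < margXY p x y then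
          margXY p x y * (condXY p x y z * Real.log (condXY p x y z / condY p y z)) else 0) := by
        refine Finset.sum_congr rfl fun y _ => ?_
        rw [hbb, haa]; dsimp only
        split_ifs with h
        · simp only [condXY]
          rw [div_div, ← mul_assoc, mul_comm (margXY p x y) (p (x, y, z) / margXY p x y),
            div_mul_cancel₀ _ h.ne']
        · have hxy : margXY p x y = 0 := le_antisymm (not_lt.1 h) (aux_margXY_nonneg p hp0 x y)
          have hpz : p (x, y, z) = 0 := by
            by_contra hc
            exact h (aux_margXY_pos p hp0 ((hp0 _).lt_of_ne (Ne.symm hc)))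
          rw [hpz, zero_mul]

lemma aux_keyx (hp0 : ∀ a, 0 ≤ p a) {x : 𝓧} (hx : 0 < margX p x) :
    margX p x * (∑ z, condX p x z * Real.log (condX p x z / rmix p x z)) ≤
      ∑ y, (if 0 < margXY p x y then
        margXY p x y * ∑ z, condXY p x y z * Real.log (condXY p x y z / condY p y z) else 0) := by
  rw [Finset.mul_sum]
  have hre : (∑ y, (if 0 < margXY p x y then
        margXY p x y * ∑ z, condXY p x y z * Real.log (condXY p x y z / condY p y z) else 0))
      = ∑ z, ∑ y, (if 0 < margXY p x y then
        margXY p x y * (condXY p x y z * Real.log (condXY p x y z / condY p y z)) else 0) := by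
    refine (Finset.sum_congr rfl fun y _ => ?_).trans Finset.sum_comm
    split_ifs with h
    · exact Finset.mul_sum _ _ _
    · exact Finset.sum_const_zero.symm
  rw [hre]
  exact Finset.sum_le_sum fun z _ => aux_keyz p hp0 hx z

end AuxConv

/-- Convexity step:
`Σ_{x,y : p(x,y)>0} p(x,y)·D(p(·|x,y)‖p(·|y)) ≥ Σ_{x : p(x)>0} p(x)·D(p(·|x)‖r_x)`,
where `r_x = Σ_{y : p(y|x)>0} p(y|x)·p(·|y)`; moreover `r_x ∈ C_Y` for every `x` with
`p(x) > 0`, so `I(Z;X,Y) − I(Z;Y) ≥ Σ_{x : p(x)>0} p(x)·inf_{q ∈ C_Y} D(p(·|x)‖q)`. -/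
theorem convexity_step
    [Nonempty 𝓧] [Nonempty 𝓨] [Nonempty 𝓩]
    (p : 𝓧 × 𝓨 × 𝓩 → ℝ) (hp : IsPMF p) :
    (∑ x, if 0 < margX p x then
          ((margX p x : EReal) * klDiv (condX p x) (rmix p x)) else 0) ≤
      (∑ x, ∑ y, if 0 < margXY p x y then
          ((margXY p x y : EReal) * klDiv (condXY p x y) (condY p y)) else 0) ∧
    (∀ x, 0 < margX p x → rmix p x ∈ CYhull p) ∧
    (∑ x, if 0 < margX p x then
          ((margX p x : EReal) * ⨅ q ∈ CYhull p, klDiv (condX p x) q) else 0) ≤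
      ((miZXY p - miZY p : ℝ) : EReal) := by
  classical
  obtain ⟨hp0, -⟩ := hp
  -- Part 2 : `r_x ∈ C_Y`
  have part2 : ∀ x, 0 < margX p x → rmix p x ∈ CYhull p := by
    intro x hx
    set t : Finset 𝓨 := Finset.univ.filter fun y => 0 < margXY p x y with ht
    have hw : ∀ y ∈ t, (0 : ℝ) ≤ margXY p x y / margX p x := fun y _ =>
      div_nonneg (aux_margXY_nonneg p hp0 x y) (aux_margX_nonneg p hp0 x)
    have hts : ∑ y ∈ t, margXY p x y = margX p x := by
      rw [ht, Finset.sum_filter_of_ne]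
      · rfl
      · exact fun y _ h => (aux_margXY_nonneg p hp0 x y).lt_of_ne (Ne.symm h)
    have hsum : ∑ y ∈ t, margXY p x y / margX p x = 1 := by
      rw [← Finset.sum_div, hts, div_self hx.ne']
    have heq : rmix p x = ∑ y ∈ t, (margXY p x y / margX p x) • condY p y := by
      funext z
      rw [Finset.sum_apply]
      simp only [Pi.smul_apply, smul_eq_mul]
      show (∑ y, if 0 < margXY p x y then (margXY p x y / margX p x) * condY p y z else 0) = _
      rw [ht, Finset.sum_filter]
    rw [heq]
    show _ ∈ CYhull p
    simp only [CYhull]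
    refine Convex.sum_mem (convex_convexHull ℝ _) hw hsum fun y hy => ?_
    refine subset_convexHull ℝ _ ⟨y, ?_, rfl⟩
    exact lt_of_lt_of_le (Finset.mem_filter.1 hy).2 (aux_margXY_le_margY p hp0 x y)
  -- klDiv values are finite (absolute continuity holds)
  have hklX : ∀ x, 0 < margX p x → klDiv (condX p x) (rmix p x) =
      ((∑ z, condX p x z * Real.log (condX p x z / rmix p x z) : ℝ) : EReal) := by
    intro x hx
    simp only [klDiv]
    rw [if_pos (aux_ac_X p hp0 hx)]
  have hklXY : ∀ x y, 0 < margXY p x y → klDiv (condXY p x y) (condY p y) =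
      ((∑ z, condXY p x y z * Real.log (condXY p x y z / condY p y z) : ℝ) : EReal) := by
    intro x y hxy
    simp only [klDiv]
    rw [if_pos (aux_ac_XY p hp0 hxy)]
  -- EReal sides as coercions of real sums
  have hLHS1 : (∑ x, if 0 < margX p x then
        ((margX p x : EReal) * klDiv (condX p x) (rmix p x)) else 0)
      = ((∑ x, if 0 < margX p x then
          margX p x * (∑ z, condX p x z * Real.log (condX p x z / rmix p x z)) else 0 : ℝ) :
            EReal) := by
    rw [aux_coe_sum]
    refine Finset.sum_congr rfl fun x _ => ?_
    split_ifs with h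
    · rw [hklX x h]; exact (EReal.coe_mul _ _).symm
    · exact EReal.coe_zero.symm
  have hRHS1 : (∑ x, ∑ y, if 0 < margXY p x y then
        ((margXY p x y : EReal) * klDiv (condXY p x y) (condY p y)) else 0)
      = ((∑ x, ∑ y, if 0 < margXY p x y then
          margXY p x y * (∑ z, condXY p x y z * Real.log (condXY p x y z / condY p y z))
          else 0 : ℝ) : EReal) := by
    rw [aux_coe_sum]
    refine Finset.sum_congr rfl fun x _ => ?_
    rw [aux_coe_sum]
    refine Finset.sum_congr rfl fun y _ => ?_
    split_ifs with h
    · rw [hklXY x y h]; exact (EReal.coe_mul _ _).symm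
    · exact EReal.coe_zero.symm
  -- Part 1 at the level of reals
  have hreal1 : (∑ x, if 0 < margX p x then
        margX p x * (∑ z, condX p x z * Real.log (condX p x z / rmix p x z)) else 0)
      ≤ ∑ x, ∑ y, if 0 < margXY p x y then
          margXY p x y * (∑ z, condXY p x y z * Real.log (condXY p x y z / condY p y z))
          else 0 := by
    refine Finset.sum_le_sum fun x _ => ?_
    by_cases h : 0 < margX p x
    · rw [if_pos h]; exact aux_keyx p hp0 h
    · rw [if_neg h]
      refine (Finset.sum_eq_zero fun y _ => ?_).ge
      rw [if_neg]
      exact fun hc => h (lt_of_lt_of_le hc (aux_margXY_le_margX p hp0 x y))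
  have part1 : (∑ x, if 0 < margX p x then
        ((margX p x : EReal) * klDiv (condX p x) (rmix p x)) else 0) ≤
      (∑ x, ∑ y, if 0 < margXY p x y then
        ((margXY p x y : EReal) * klDiv (condXY p x y) (condY p y)) else 0) := by
    rw [hLHS1, hRHS1]
    exact_mod_cast hreal1
  -- Identity : the real RHS equals `miZXY - miZY`
  have e1 : miZY p = ∑ x, ∑ y, ∑ z,
      p (x, y, z) * Real.log (margYZ p y z / (margY p y * margZ p z)) := by
    calc miZY p = ∑ y, ∑ z, ∑ x,
        p (x, y, z) * Real.log (margYZ p y z / (margY p y * margZ p z)) :=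
          Finset.sum_congr rfl fun y _ => Finset.sum_congr rfl fun z _ =>
            Finset.sum_mul _ _ _
      _ = ∑ y, ∑ x, ∑ z,
        p (x, y, z) * Real.log (margYZ p y z / (margY p y * margZ p z)) :=
          Finset.sum_congr rfl fun y _ => Finset.sum_comm
      _ = ∑ x, ∑ y, ∑ z,
        p (x, y, z) * Real.log (margYZ p y z / (margY p y * margZ p z)) := Finset.sum_comm
  have e3 : ∀ x y z, (if 0 < margXY p x y then
        p (x, y, z) * Real.log (p (x, y, z) / (margXY p x y * condY p y z)) else 0)
      = p (x, y, z) * Real.log (p (x, y, z) / (margXY p x y * margZ p z))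
        - p (x, y, z) * Real.log (margYZ p y z / (margY p y * margZ p z)) := by
    intro x y z
    rcases eq_or_lt_of_le (hp0 (x, y, z)) with h0 | hpz
    · rw [← h0]; simp
    · have hxy := aux_margXY_pos p hp0 hpz
      have hyz := aux_margYZ_pos p hp0 hpz
      have hy : 0 < margY p y := lt_of_lt_of_le hyz (aux_margYZ_le_margY p hp0 y z)
      have hz : 0 < margZ p z := aux_margZ_pos p hp0 hpz
      rw [if_pos hxy, ← mul_sub,
        ← Real.log_div (div_pos hpz (mul_pos hxy hz)).ne' (div_pos hyz (mul_pos hy hz)).ne']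
      congr 1
      congr 1
      simp only [condY]
      field_simp
  have hid : (∑ x, ∑ y, if 0 < margXY p x y then
        margXY p x y * (∑ z, condXY p x y z * Real.log (condXY p x y z / condY p y z))
        else 0) = miZXY p - miZY p := by
    have e2 : (∑ x, ∑ y, if 0 < margXY p x y then
          margXY p x y * (∑ z, condXY p x y z * Real.log (condXY p x y z / condY p y z))
          else 0)
        = ∑ x, ∑ y, ∑ z, (if 0 < margXY p x y then
            p (x, y, z) * Real.log (p (x, y, z) / (margXY p x y * condY p y z)) else 0) := by
      refine Finset.sum_congr rfl fun x _ => Finset.sum_congr rfl fun y _ => ?_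
      split_ifs with h
      · rw [Finset.mul_sum]
        refine Finset.sum_congr rfl fun z _ => ?_
        simp only [condXY]
        rw [div_div, ← mul_assoc, mul_comm (margXY p x y) (p (x, y, z) / margXY p x y),
          div_mul_cancel₀ _ h.ne']
      · exact Finset.sum_const_zero.symm
    rw [e2]
    calc (∑ x, ∑ y, ∑ z, (if 0 < margXY p x y then
          p (x, y, z) * Real.log (p (x, y, z) / (margXY p x y * condY p y z)) else 0))
        = ∑ x, ∑ y, ∑ z,
            (p (x, y, z) * Real.log (p (x, y, z) / (margXY p x y * margZ p z))
              - p (x, y, z) * Real.log (margYZ p y z / (margY p y * margZ p z))) :=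
          Finset.sum_congr rfl fun x _ => Finset.sum_congr rfl fun y _ =>
            Finset.sum_congr rfl fun z _ => e3 x y z
      _ = (∑ x, ∑ y, ∑ z, p (x, y, z) * Real.log (p (x, y, z) / (margXY p x y * margZ p z)))
            - ∑ x, ∑ y, ∑ z,
              p (x, y, z) * Real.log (margYZ p y z / (margY p y * margZ p z)) := by
          simp only [Finset.sum_sub_distrib]
      _ = miZXY p - miZY p := by rw [e1]; rfl
  refine ⟨part1, part2, ?_⟩
  have step : (∑ x, if 0 < margX p x then
        ((margX p x : EReal) * ⨅ q ∈ CYhull p, klDiv (condX p x) q) else 0) ≤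
      (∑ x, if 0 < margX p x then
        ((margX p x : EReal) * klDiv (condX p x) (rmix p x)) else 0) := by
    refine Finset.sum_le_sum fun x _ => ?_
    split_ifs with h
    · refine mul_le_mul_of_nonneg_left (iInf₂_le _ (part2 x h)) ?_
      exact_mod_cast (aux_margX_nonneg p hp0 x)
    · exact le_refl 0
  refine step.trans (part1.trans ?_)
  rw [hRHS1, hid]
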